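/- Among all VCG mechanisms sharing a fixed socially efficient option rule φ that are individually rational, the VCG-budget mechanism has pointwise minimal payments: if (φ, τ) is a VCG mechanism (τ_i(v) = Σ_{j≠i} v_j(φ(v)) − h_i(v_{-i}) for some h_i) that satisfies individual rationality, then τ_i^b(v) ≤ τ_i(v) for all i and v, and consequently the budget satisfies Σ_i τ_i^b(v) ≤ Σ_i τ_i(v) for all v. -/

import Mathlib

/-- VCG-budget has pointwise minimal payments, hence minimal budget, among all
individually rational VCG mechanisms sharing the socially efficient option rule φ. -/
theorem vcg_budget_optimal {N X : Type*} [Fintype N] [DecidableEq N]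
    [Fintype X] [Nonempty X]
    (V : N → Finset (X → ℝ)) (hVne : ∀ i, (V i).Nonempty)
    (φ : (N → (X → ℝ)) → X)
    (hSE : ∀ v : N → (X → ℝ), (∀ i, v i ∈ V i) →
      ∀ x : X, ∑ i, v i x ≤ ∑ i, v i (φ v))
    (h : N → (N → (X → ℝ)) → ℝ) (τ : N → (N → (X → ℝ)) → ℝ)
    (hh : ∀ (i : N) (v : N → (X → ℝ)) (vi' : X → ℝ),
      h i (Function.update v i vi') = h i v)
    (hτ : ∀ (i : N) (v : N → (X → ℝ)),
      τ i v = (∑ j ∈ Finset.univ.erase i, v j (φ v)) - h i v)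
    (hIR : ∀ v : N → (X → ℝ), (∀ i, v i ∈ V i) → ∀ i : N,
      0 ≤ v i (φ v) + τ i v)
    (τb : N → (N → (X → ℝ)) → ℝ)
    (hτb : ∀ (i : N) (v : N → (X → ℝ)),
      τb i v = (∑ j ∈ Finset.univ.erase i, v j (φ v)) -
        (V i).inf' (hVne i) (fun vi' =>
          (Finset.univ : Finset X).sup' Finset.univ_nonempty
            (fun x => ∑ j, Function.update v i vi' j x))) :
    ∀ v : N → (X → ℝ), (∀ i, v i ∈ V i) →
      (∀ i : N, τb i v ≤ τ i v) ∧ (∑ i, τb i v) ≤ ∑ i, τ i v := by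
  intro v hv
  have main : ∀ i : N, τb i v ≤ τ i v := by
    intro i
    rw [hτb, hτ]
    apply sub_le_sub_left
    apply Finset.le_inf'
    intro vi' hvi'
    set w := Function.update v i vi' with hwdef
    have hw : ∀ j, w j ∈ V j := by
      intro j
      by_cases hj : j = i
      · subst hj; simpa [w] using hvi'
      · simpa [w, Function.update_of_ne hj] using hv j
    have hIRw := hIR w hw i
    rw [hτ] at hIRw
    have h1 : h i w = h i v := hh i v vi'
    have hsum : w i (φ w) + ∑ j ∈ Finset.univ.erase i, w j (φ w)
        = ∑ j, w j (φ w) :=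
      Finset.add_sum_erase Finset.univ (fun j => w j (φ w)) (Finset.mem_univ i)
    have hle : ∑ j, w j (φ w) ≤
        (Finset.univ : Finset X).sup' Finset.univ_nonempty
          (fun x => ∑ j, Function.update v i vi' j x) := by
      have := Finset.le_sup' (fun x => ∑ j, Function.update v i vi' j x)
        (Finset.mem_univ (φ w))
      exact this
    linarith
  exact ⟨main, Finset.sum_le_sum fun i _ => main i⟩
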